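/- Let n_1, …, n_m be positive integers, let l = n_1 + ⋯ + n_m, and suppose n_j ≥ 2 for some j. Then 2^{l−1} · (n_1!)²⋯(n_m!)² / ((2n_1+1)!⋯(2n_m+1)!) lies in ℤ_(2), i.e. has nonnegative 2-adic valuation. -/

import Mathlib

theorem two_pow_mul_prod_mem_int_two (m : ℕ) (hm : 1 ≤ m) (n : Fin m → ℕ)
    (hn : ∀ i, 1 ≤ n i) (j : Fin m) (hj : 2 ≤ n j) (l : ℕ) (hl : l = ∑ i, n i) :
    0 ≤ padicValRat 2
        ((2 : ℚ) ^ (l - 1) *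
          ((∏ i, ((n i).factorial : ℚ) ^ 2) / ∏ i, ((2 * n i + 1).factorial : ℚ))) := by
  haveI : Fact (Nat.Prime 2) := ⟨Nat.prime_two⟩
  set S : Fin m → ℕ := fun i => (Nat.digits 2 (n i)).sum with hSdef
  have hSle : ∀ i, S i ≤ n i := fun i => Nat.digit_sum_le 2 (n i)
  have hv1 : ∀ i, padicValNat 2 (n i).factorial = n i - S i := by
    intro i
    have := sub_one_mul_padicValNat_factorial (p := 2) (n i)
    simpa using this
  have hv2 : ∀ i, padicValNat 2 (2 * n i + 1).factorial = n i + (n i - S i) := by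
    intro i
    have hdig : (Nat.digits 2 (2 * n i + 1)).sum = 1 + S i := by
      rw [Nat.digits_def' (by norm_num : 1 < 2) (by omega)]
      have h1 : (2 * n i + 1) % 2 = 1 := by omega
      have h2 : (2 * n i + 1) / 2 = n i := by omega
      rw [h1, h2, List.sum_cons]
    have := sub_one_mul_padicValNat_factorial (p := 2) (2 * n i + 1)
    simp only [hdig] at this
    have h3 := hSle i
    omega
  have hSj : S j < n j := by
    have h1 : S j = n j % 2 + (Nat.digits 2 (n j / 2)).sum := by
      rw [hSdef]
      simp only
      rw [Nat.digits_def' (by norm_num : 1 < 2) (by omega), List.sum_cons]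
    have h2 : (Nat.digits 2 (n j / 2)).sum ≤ n j / 2 := Nat.digit_sum_le 2 (n j / 2)
    omega
  -- rewrite the rational as a quotient of naturals
  set N : ℕ := 2 ^ (l - 1) * ∏ i, (n i).factorial ^ 2 with hNdef
  set B : ℕ := ∏ i, (2 * n i + 1).factorial with hBdef
  have hN : N ≠ 0 := by
    apply Nat.mul_ne_zero (by positivity)
    exact Finset.prod_ne_zero_iff.2 fun i _ => pow_ne_zero _ (Nat.factorial_ne_zero _)
  have hB : B ≠ 0 := Finset.prod_ne_zero_iff.2 fun i _ => Nat.factorial_ne_zero _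
  have hcast : (2 : ℚ) ^ (l - 1) *
      ((∏ i, ((n i).factorial : ℚ) ^ 2) / ∏ i, ((2 * n i + 1).factorial : ℚ))
      = (N : ℚ) / (B : ℚ) := by
    rw [hNdef, hBdef]
    push_cast
    ring
  rw [hcast, padicValRat.div (p := 2) (by exact_mod_cast hN) (by exact_mod_cast hB),
    padicValRat.of_nat, padicValRat.of_nat, sub_nonneg, Nat.cast_le]
  -- compute both valuations via factorization
  have hfN : padicValNat 2 N = (l - 1) + ∑ i, 2 * (n i - S i) := by
    rw [← Nat.factorization_def _ Nat.prime_two, hNdef,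
      Nat.factorization_mul (by positivity)
        (Finset.prod_ne_zero_iff.2 fun i _ => pow_ne_zero _ (Nat.factorial_ne_zero _)),
      Nat.factorization_prod (fun i _ => pow_ne_zero _ (Nat.factorial_ne_zero _)),
      Nat.factorization_pow]
    simp only [Nat.Prime.factorization Nat.prime_two, Finsupp.coe_add, Finsupp.coe_smul,
      Finsupp.coe_finset_sum, Pi.add_apply, Pi.smul_apply, Finset.sum_apply, Finsupp.smul_apply,
      Finsupp.single_eq_same, smul_eq_mul, mul_one]
    congr 1
    refine Finset.sum_congr rfl fun i _ => ?_
    rw [Nat.factorization_def _ Nat.prime_two,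
      padicValNat.pow _ _, hv1 i]
  have hfB : padicValNat 2 B = ∑ i, (n i + (n i - S i)) := by
    rw [← Nat.factorization_def _ Nat.prime_two, hBdef,
      Nat.factorization_prod (fun i _ => Nat.factorial_ne_zero _)]
    simp only [Finsupp.coe_finset_sum, Finset.sum_apply]
    refine Finset.sum_congr rfl fun i _ => ?_
    rw [Nat.factorization_def _ Nat.prime_two, hv2 i]
  rw [hfN, hfB]
  have hlj : n j ≤ l := hl ▸ Finset.single_le_sum (f := n) (fun i _ => Nat.zero_le _)
    (Finset.mem_univ j)
  have hdj : n j - S j ≤ ∑ i, (n i - S i) :=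
    Finset.single_le_sum (f := fun i => n i - S i)
      (fun i _ => Nat.zero_le _) (Finset.mem_univ j)
  rw [Finset.sum_add_distrib, ← hl, ← Finset.mul_sum]
  omega
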